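/- For all positive integers n and k with n, k ≥ 1: ∑_{m=0}^{n} (-1)^{n+m} m! S(n,m) (m+1)^k = ∑_{m=0}^{k} (-1)^{k+m} m! S(k,m) (m+1)^n, i.e., the inclusion-exclusion formula for poly-Bernoulli numbers is symmetric in n and k. -/

import Mathlib

/-- Stirling numbers of the second kind: `stirling n r` is the number of
partitions of an `n`-element set into `r` non-empty blocks. -/
def stirling : ℕ → ℕ → ℕ
  | 0, 0 => 1
  | 0, _ + 1 => 0
  | _ + 1, 0 => 0
  | n + 1, r + 1 => (r + 1) * stirling n (r + 1) + stirling n r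

lemma stirling_succ_succ (n r : ℕ) :
    stirling (n + 1) (r + 1) = (r + 1) * stirling n (r + 1) + stirling n r := rfl

lemma stirling_succ_zero (n : ℕ) : stirling (n + 1) 0 = 0 := rfl

lemma stirling_eq_zero_of_lt : ∀ {n r : ℕ}, n < r → stirling n r = 0 := by
  intro n
  induction n with
  | zero => intro r h; cases r with
    | zero => omega
    | succ r => rfl
  | succ n ih =>
    intro r h
    cases r with
    | zero => omega
    | succ r =>
      rw [stirling_succ_succ, ih (by omega), ih (by omega)]
      simp

lemma choose_aux (m j : ℕ) :
    ((m : ℤ) + 1) * ((m + 1).choose (j + 1)) =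
      ((m : ℤ) + j + 2) * (m.choose (j + 1)) + ((j : ℤ) + 1) * (m.choose j) := by
  have h1 : (((m + 1).choose (j + 1) : ℤ)) = m.choose j + m.choose (j + 1) := by
    exact_mod_cast congrArg (Nat.cast : ℕ → ℤ) (Nat.choose_succ_succ m j)
  have h2 : ((m : ℤ) + 1) * (m.choose j) = ((m + 1).choose (j + 1)) * ((j : ℤ) + 1) := by
    exact_mod_cast Nat.add_one_mul_choose_eq m j
  linear_combination ((m : ℤ) + j + 2) * h1 + h2

lemma choose_aux2 (m j : ℕ) :
    ((m : ℤ) + 1) * (m.choose j) =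
      ((j : ℤ) + 1) * (m.choose j) + ((j : ℤ) + 1) * (m.choose (j + 1)) := by
  have h1 : (((m + 1).choose (j + 1) : ℤ)) = m.choose j + m.choose (j + 1) := by
    exact_mod_cast congrArg (Nat.cast : ℕ → ℤ) (Nat.choose_succ_succ m j)
  have h2 : ((m : ℤ) + 1) * (m.choose j) = ((m + 1).choose (j + 1)) * ((j : ℤ) + 1) := by
    exact_mod_cast Nat.add_one_mul_choose_eq m j
  linear_combination ((j : ℤ) + 1) * h1 + h2

lemma pow_eq (k m : ℕ) :
    ((m : ℤ) + 1) ^ k =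
      ∑ j ∈ Finset.range (k + 1),
        (stirling (k + 1) (j + 1) : ℤ) * (Nat.factorial j) * (Nat.choose m j) := by
  induction k with
  | zero => simp [stirling]
  | succ k ih =>
    have hA : (∑ j ∈ Finset.range (k + 2),
        ((j : ℤ) + 1) * (stirling (k + 1) (j + 1)) * j.factorial * m.choose j)
        = ∑ j ∈ Finset.range (k + 1),
        ((j : ℤ) + 1) * (stirling (k + 1) (j + 1)) * j.factorial * m.choose j := by
      rw [Finset.sum_range_succ, stirling_eq_zero_of_lt (by omega)]
      push_cast; ring
    have hB : (∑ j ∈ Finset.range (k + 2),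
        (stirling (k + 1) j : ℤ) * j.factorial * m.choose j)
        = ∑ j ∈ Finset.range (k + 1),
        (stirling (k + 1) (j + 1) : ℤ) * (j + 1).factorial * m.choose (j + 1) := by
      rw [Finset.sum_range_succ' (fun j => (stirling (k + 1) j : ℤ) * j.factorial * m.choose j)]
      simp [stirling_succ_zero]
    calc ((m : ℤ) + 1) ^ (k + 1) = ((m : ℤ) + 1) * ((m : ℤ) + 1) ^ k := by ring
    _ = ∑ j ∈ Finset.range (k + 1),
          (stirling (k + 1) (j + 1) : ℤ) * j.factorial * (((m : ℤ) + 1) * m.choose j) := by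
        rw [ih, Finset.mul_sum]; exact Finset.sum_congr rfl (by intros; ring)
    _ = ∑ j ∈ Finset.range (k + 1),
          (((j : ℤ) + 1) * (stirling (k + 1) (j + 1)) * j.factorial * m.choose j
          + (stirling (k + 1) (j + 1) : ℤ) * (j + 1).factorial * m.choose (j + 1)) := by
        refine Finset.sum_congr rfl fun j _ => ?_
        rw [choose_aux2 m j]
        push_cast [Nat.factorial_succ]
        ring
    _ = (∑ j ∈ Finset.range (k + 1),
          ((j : ℤ) + 1) * (stirling (k + 1) (j + 1)) * j.factorial * m.choose j)
        + ∑ j ∈ Finset.range (k + 1),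
          (stirling (k + 1) (j + 1) : ℤ) * (j + 1).factorial * m.choose (j + 1) :=
        Finset.sum_add_distrib
    _ = (∑ j ∈ Finset.range (k + 2),
          ((j : ℤ) + 1) * (stirling (k + 1) (j + 1)) * j.factorial * m.choose j)
        + ∑ j ∈ Finset.range (k + 2),
          (stirling (k + 1) j : ℤ) * j.factorial * m.choose j := by rw [hA, hB]
    _ = ∑ j ∈ Finset.range (k + 2),
          (stirling (k + 2) (j + 1) : ℤ) * j.factorial * m.choose j := by
        rw [← Finset.sum_add_distrib]
        refine Finset.sum_congr rfl fun j _ => ?_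
        rw [stirling_succ_succ (k + 1) j]
        push_cast; ring

lemma key (n : ℕ) : ∀ j : ℕ,
    (∑ m ∈ Finset.range (n + 1),
      (-1 : ℤ) ^ (n + m) * (Nat.factorial m) * (stirling n m) * (Nat.choose m j))
      = (Nat.factorial j) * stirling (n + 1) (j + 1) := by
  induction n with
  | zero =>
    intro j
    cases j with
    | zero => simp [stirling]
    | succ j => simp [stirling, stirling_eq_zero_of_lt (by omega : 0 < j + 1)]
  | succ n ih =>
    intro j
    set H : ℕ → ℤ := fun m =>
      (-1 : ℤ) ^ (n + m) * (m : ℤ) * (Nat.factorial m) * (stirling n m) * (Nat.choose m j)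
      with hH
    have hsign : ∀ m : ℕ, (-1 : ℤ) ^ (n + 1 + (m + 1)) = (-1 : ℤ) ^ (n + m) := by
      intro m
      rw [show n + 1 + (m + 1) = (n + m) + 2 by ring, pow_add]
      ring
    have step1 : (∑ m ∈ Finset.range (n + 2),
        (-1 : ℤ) ^ (n + 1 + m) * (Nat.factorial m) * (stirling (n + 1) m) * (Nat.choose m j))
        = ∑ m ∈ Finset.range (n + 1),
        ((-1 : ℤ) ^ (n + m) * (Nat.factorial m) * (stirling n m) *
          (((m : ℤ) + 1) * ((m + 1).choose j)) - H m) := by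
      rw [Finset.sum_range_succ' (fun m => (-1 : ℤ) ^ (n + 1 + m) * (Nat.factorial m) *
        (stirling (n + 1) m) * (Nat.choose m j))]
      simp only [stirling_succ_zero, Nat.cast_zero, mul_zero, zero_mul, add_zero]
      have hsplit : ∀ m : ℕ, (-1 : ℤ) ^ (n + 1 + (m + 1)) * (Nat.factorial (m + 1)) *
            (stirling (n + 1) (m + 1)) * (Nat.choose (m + 1) j)
          = (-1 : ℤ) ^ (n + m) * (Nat.factorial m) * (stirling n m) *
              (((m : ℤ) + 1) * ((m + 1).choose j)) - H (m + 1) := by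
        intro m
        rw [stirling_succ_succ n m, hsign m, hH]
        simp only []
        rw [show n + (m + 1) = (n + m) + 1 by ring, pow_succ]
        push_cast [Nat.factorial_succ]
        ring
      have hHshift : (∑ m ∈ Finset.range (n + 1), H (m + 1))
          = ∑ m ∈ Finset.range (n + 1), H m := by
        have e1 := Finset.sum_range_succ' H (n + 1)
        have e2 := Finset.sum_range_succ H (n + 1)
        have h0 : H 0 = 0 := by simp [hH]
        have hn1 : H (n + 1) = 0 := by
          simp [hH, stirling_eq_zero_of_lt (by omega : n < n + 1)]
        rw [h0, add_zero] at e1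
        rw [hn1, add_zero] at e2
        rw [← e1, e2]
      calc (∑ m ∈ Finset.range (n + 1), (-1 : ℤ) ^ (n + 1 + (m + 1)) *
              (Nat.factorial (m + 1)) * (stirling (n + 1) (m + 1)) * (Nat.choose (m + 1) j))
          = ∑ m ∈ Finset.range (n + 1), ((-1 : ℤ) ^ (n + m) * (Nat.factorial m) *
              (stirling n m) * (((m : ℤ) + 1) * ((m + 1).choose j)) - H (m + 1)) :=
            Finset.sum_congr rfl fun m _ => hsplit m
      _ = (∑ m ∈ Finset.range (n + 1), (-1 : ℤ) ^ (n + m) * (Nat.factorial m) *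
              (stirling n m) * (((m : ℤ) + 1) * ((m + 1).choose j)))
            - ∑ m ∈ Finset.range (n + 1), H (m + 1) := Finset.sum_sub_distrib _ _
      _ = (∑ m ∈ Finset.range (n + 1), (-1 : ℤ) ^ (n + m) * (Nat.factorial m) *
              (stirling n m) * (((m : ℤ) + 1) * ((m + 1).choose j)))
            - ∑ m ∈ Finset.range (n + 1), H m := by rw [hHshift]
      _ = ∑ m ∈ Finset.range (n + 1),
            ((-1 : ℤ) ^ (n + m) * (Nat.factorial m) * (stirling n m) *
              (((m : ℤ) + 1) * ((m + 1).choose j)) - H m) := (Finset.sum_sub_distrib _ _).symm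
    rw [step1]
    cases j with
    | zero =>
      have h0 : (∑ m ∈ Finset.range (n + 1),
          ((-1 : ℤ) ^ (n + m) * (Nat.factorial m) * (stirling n m) *
            (((m : ℤ) + 1) * ((m + 1).choose 0)) - H m))
          = ∑ m ∈ Finset.range (n + 1),
          (-1 : ℤ) ^ (n + m) * (Nat.factorial m) * (stirling n m) * (Nat.choose m 0) := by
        refine Finset.sum_congr rfl fun m _ => ?_
        simp [hH]
        ring
      rw [h0, ih 0, stirling_succ_succ (n + 1) 0, stirling_succ_zero]
      push_cast
      ring
    | succ j =>
      have h1 : (∑ m ∈ Finset.range (n + 1),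
          ((-1 : ℤ) ^ (n + m) * (Nat.factorial m) * (stirling n m) *
            (((m : ℤ) + 1) * ((m + 1).choose (j + 1))) - H m))
          = ∑ m ∈ Finset.range (n + 1),
          (((j : ℤ) + 2) * ((-1 : ℤ) ^ (n + m) * (Nat.factorial m) * (stirling n m) *
              (Nat.choose m (j + 1)))
            + ((j : ℤ) + 1) * ((-1 : ℤ) ^ (n + m) * (Nat.factorial m) * (stirling n m) *
              (Nat.choose m j))) := by
        refine Finset.sum_congr rfl fun m _ => ?_
        simp only [hH]
        linear_combination ((-1 : ℤ) ^ (n + m) * (Nat.factorial m) * (stirling n m)) *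
          choose_aux m j
      rw [h1, Finset.sum_add_distrib, ← Finset.mul_sum, ← Finset.mul_sum, ih (j + 1), ih j]
      rw [stirling_succ_succ (n + 1) (j + 1)]
      push_cast [Nat.factorial_succ]
      ring

lemma main_aux (n k : ℕ) :
    (∑ m ∈ Finset.range (n + 1),
        (-1 : ℤ) ^ (n + m) * Nat.factorial m * stirling n m * (m + 1) ^ k) =
      ∑ j ∈ Finset.range (max n k + 1),
        ((Nat.factorial j : ℤ) * stirling (n + 1) (j + 1)) *
          ((Nat.factorial j : ℤ) * stirling (k + 1) (j + 1)) := by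
  have h1 : (∑ m ∈ Finset.range (n + 1),
      (-1 : ℤ) ^ (n + m) * Nat.factorial m * stirling n m * (m + 1) ^ k)
      = ∑ m ∈ Finset.range (n + 1), ∑ j ∈ Finset.range (k + 1),
        ((stirling (k + 1) (j + 1) : ℤ) * (Nat.factorial j)) *
          ((-1 : ℤ) ^ (n + m) * Nat.factorial m * stirling n m * (Nat.choose m j)) := by
    refine Finset.sum_congr rfl fun m _ => ?_
    rw [pow_eq k m, Finset.mul_sum]
    exact Finset.sum_congr rfl fun j _ => by ring
  rw [h1, Finset.sum_comm]
  have h2 : ∀ j ∈ Finset.range (k + 1),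
      (∑ m ∈ Finset.range (n + 1),
        ((stirling (k + 1) (j + 1) : ℤ) * (Nat.factorial j)) *
          ((-1 : ℤ) ^ (n + m) * Nat.factorial m * stirling n m * (Nat.choose m j)))
      = ((Nat.factorial j : ℤ) * stirling (n + 1) (j + 1)) *
          ((Nat.factorial j : ℤ) * stirling (k + 1) (j + 1)) := by
    intro j _
    rw [← Finset.mul_sum, key n j]
    ring
  rw [Finset.sum_congr rfl h2]
  apply Finset.sum_subset
  · intro x hx
    simp only [Finset.mem_range] at *
    have := Nat.le_max_right n k
    omega
  · intro x _ hx
    simp only [Finset.mem_range] at hx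
    rw [stirling_eq_zero_of_lt (n := k + 1) (r := x + 1) (by omega)]
    push_cast
    ring

theorem inclusion_exclusion_formula_symmetric (n k : ℕ) (hn : 1 ≤ n) (hk : 1 ≤ k) :
    (∑ m ∈ Finset.range (n + 1),
        (-1 : ℤ) ^ (n + m) * Nat.factorial m * stirling n m * (m + 1) ^ k) =
      ∑ m ∈ Finset.range (k + 1),
        (-1 : ℤ) ^ (k + m) * Nat.factorial m * stirling k m * (m + 1) ^ n := by
  rw [main_aux n k, main_aux k n, Nat.max_comm]
  exact Finset.sum_congr rfl fun j _ => mul_comm _ _
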